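/- Let X be a Hausdorff space admitting a fixed-point free continuous involution τ and let q : X → X/τ be the quotient double covering. If 1 ≤ n ≤ secat(q) − 1, then the triple ((X,τ); ℝⁿ) satisfies the Borsuk–Ulam property. In particular, the ℤ/2-index of (X,τ) is at least secat(q) − 1. -/

import Mathlib

open Metric Set

/-- A continuous local section of `p` over `U`. -/
def IsLocalSection {E B : Type*} [TopologicalSpace E] [TopologicalSpace B]
    (p : E → B) (U : Set B) : Prop :=
  ∃ s : U → E, Continuous s ∧ ∀ x : U, p (s x) = (x : B)

/-- The sectional category of a map `p : E → B`: the least number of open sets covering `B`,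
over each of which `p` admits a continuous local section; `⊤` if no finite cover exists. -/
noncomputable def secat {E B : Type*} [TopologicalSpace E] [TopologicalSpace B]
    (p : E → B) : ℕ∞ :=
  sInf {n : ℕ∞ | ∃ k : ℕ, n = (k : ℕ∞) ∧ ∃ U : Fin k → Set B,
    (∀ i, IsOpen (U i)) ∧ (⋃ i, U i) = Set.univ ∧ ∀ i, IsLocalSection p (U i)}

/-- A subset is contractible within the ambient space if its inclusion is nullhomotopic. -/
def ContractibleIn {X : Type*} [TopologicalSpace X] (U : Set X) : Prop :=
  ContinuousMap.Nullhomotopic (⟨(Subtype.val : U → X), continuous_subtype_val⟩ : C(U, X))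

/-- Lusternik–Schnirelmann category: least number of open sets covering `X`, each
contractible within `X`. -/
noncomputable def LScat (X : Type*) [TopologicalSpace X] : ℕ∞ :=
  sInf {n : ℕ∞ | ∃ k : ℕ, n = (k : ℕ∞) ∧ ∃ U : Fin k → Set X,
    (∀ i, IsOpen (U i)) ∧ (⋃ i, U i) = Set.univ ∧ ∀ i, ContractibleIn (U i)}

/-- Hurewicz fibration: the homotopy lifting property with respect to all spaces. -/
def IsHurewiczFibration {E B : Type*} [TopologicalSpace E] [TopologicalSpace B]
    (p : E → B) : Prop :=
  ∀ (Z : Type*) [TopologicalSpace Z] (H : Z × unitInterval → B) (h : Z → E),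
    Continuous H → Continuous h → (∀ z, p (h z) = H (z, 0)) →
    ∃ G : Z × unitInterval → E, Continuous G ∧ (∀ z, G (z, 0) = h z) ∧ ∀ w, p (G w) = H w

/-- The orbit relation of the action generated by a map `τ`. -/
def orbitRelOf {X : Type*} (τ : X → X) : X → X → Prop := fun x y => y = τ x

/-- Quotient of `X` by the (involutive) map `τ`, with the quotient topology. -/
abbrev InvolQuot {X : Type*} [TopologicalSpace X] (τ : X → X) : Type _ := Quot (orbitRelOf τ)

/-- The quotient map `X → X/τ`. -/
def involQuotMk {X : Type*} [TopologicalSpace X] (τ : X → X) : X → InvolQuot τ :=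
  Quot.mk (orbitRelOf τ)

/-- The ordered configuration space `F(Y,2)` of two distinct points of `Y`. -/
abbrev Conf2 (Y : Type*) [TopologicalSpace Y] : Type _ := {p : Y × Y // p.1 ≠ p.2}

/-- The swap involution `τ₂` on `F(Y,2)`. -/
def confSwap {Y : Type*} [TopologicalSpace Y] : Conf2 Y → Conf2 Y :=
  fun p => ⟨(p.1.2, p.1.1), Ne.symm p.2⟩

/-- The unordered configuration space `D(Y,2) = F(Y,2)/τ₂`. -/
abbrev UConf2 (Y : Type*) [TopologicalSpace Y] : Type _ := InvolQuot (confSwap (Y := Y))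

/-- The quotient double covering `q^Y : F(Y,2) → D(Y,2)`. -/
def confQuotMk (Y : Type*) [TopologicalSpace Y] : Conf2 Y → UConf2 Y :=
  involQuotMk confSwap

/-- The Borsuk–Ulam property for the triple `((X,τ);Y)`. -/
def BorsukUlamProperty (X : Type*) [TopologicalSpace X] (τ : X → X)
    (Y : Type*) [TopologicalSpace Y] : Prop :=
  ∀ f : X → Y, Continuous f → ∃ x : X, f (τ x) = f x

/-- The `m`-sphere as the unit sphere of `ℝ^{m+1}`. -/
abbrev Sph (m : ℕ) : Type := Metric.sphere (0 : EuclideanSpace ℝ (Fin (m + 1))) 1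

/-- The antipodal involution on the sphere. -/
noncomputable def antipodal (m : ℕ) : Sph m → Sph m := fun x => -x

/-- The smallest dimension of a Euclidean space into which `Y` embeds. -/
noncomputable def embDim (Y : Type*) [TopologicalSpace Y] : ℕ∞ :=
  sInf {n : ℕ∞ | ∃ k : ℕ, n = (k : ℕ∞) ∧
    ∃ e : Y → EuclideanSpace ℝ (Fin k), Topology.IsEmbedding e}

/-- The `ℤ/2`-index of `(X,τ)`: the least `n` such that there is a continuous map
`X → Sⁿ` which is equivariant for `τ` and the antipodal involution. -/
noncomputable def z2Index {X : Type*} [TopologicalSpace X] (τ : X → X) : ℕ∞ :=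
  sInf {n : ℕ∞ | ∃ k : ℕ, n = (k : ℕ∞) ∧
    ∃ g : X → Sph k, Continuous g ∧ ∀ x, g (τ x) = antipodal k (g x)}

section CW

/-- A (classical) CW-complex structure on a Hausdorff space `X`: a family of cells
with characteristic maps from closed disks, the images of the open disks partitioning `X`,
each attaching map sending the boundary sphere into cells of lower dimension, together with
closure finiteness (C) and the weak topology (W). -/
structure CWStructure (X : Type u) [TopologicalSpace X] : Type (u + 1) where
  /-- index type of the `n`-cells -/
  cell : ℕ → Type u
  /-- characteristic map of each `n`-cell -/
  map : (n : ℕ) → cell n → EuclideanSpace ℝ (Fin n) → X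
  continuousOn : ∀ n i, ContinuousOn (map n i) (closedBall 0 1)
  injOn : ∀ n i, Set.InjOn (map n i) (ball 0 1)
  partition : ∀ x : X, ∃! p : Σ n, cell n, x ∈ map p.1 p.2 '' ball 0 1
  mapsTo_boundary : ∀ n i, Set.MapsTo (map n i) (sphere 0 1)
    (⋃ (m : ℕ) (_ : m < n) (j : cell m), map m j '' closedBall 0 1)
  closureFinite : ∀ n i, {p : Σ m, cell m |
    (map p.1 p.2 '' ball 0 1 ∩ map n i '' closedBall 0 1).Nonempty}.Finite
  weakTopology : ∀ A : Set X,
    (∀ n i, IsClosed (A ∩ map n i '' closedBall 0 1)) → IsClosed A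

namespace CWStructure

variable {X : Type u} [TopologicalSpace X] (S : CWStructure X)

/-- The `n`-skeleton of a CW structure. -/
def skeleton (n : ℕ) : Set X :=
  ⋃ (m : ℕ) (_ : m ≤ n) (j : S.cell m), S.map m j '' closedBall 0 1

/-- The CW structure has dimension at most `d`. -/
def DimLE (d : ℕ) : Prop := ∀ n, d < n → IsEmpty (S.cell n)

/-- The CW structure has dimension exactly `d`. -/
def DimEq (d : ℕ) : Prop := S.DimLE d ∧ Nonempty (S.cell d)

/-- A self-map is cellular if it maps each skeleton into itself. -/
def Cellular (f : X → X) : Prop := ∀ n, Set.MapsTo f (S.skeleton n) (S.skeleton n)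

end CWStructure

/-- The homotopical dimension of `X` is at most `d`: `X` is homotopy equivalent to a
CW complex of dimension at most `d`. -/
def HDimLE (X : Type u) [TopologicalSpace X] (d : ℕ) : Prop :=
  ∃ (Z : Type u) (_ : TopologicalSpace Z) (S : CWStructure Z),
    S.DimLE d ∧ Nonempty (ContinuousMap.HomotopyEquiv Z X)

end CW

section AuxProof

variable {X : Type*} [TopologicalSpace X]

lemma involQuotMk_eq_iff (τ : X → X) (hτinv : Function.Involutive τ) {x y : X} :
    involQuotMk τ x = involQuotMk τ y ↔ y = x ∨ y = τ x := by
  constructor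
  · intro h
    have h' := Quot.eq.mp h
    clear h
    induction h' with
    | rel a b hab => exact Or.inr hab
    | refl a => exact Or.inl rfl
    | symm a b _ ih =>
      rcases ih with h1 | h1
      · exact Or.inl h1.symm
      · subst h1; exact Or.inr (hτinv a).symm
    | trans a b c _ _ ih1 ih2 =>
      rcases ih1 with h1 | h1 <;> rcases ih2 with h2 | h2 <;> subst h1 <;> subst h2 <;>
        simp [hτinv _]
  · rintro (rfl | rfl)
    · rfl
    · exact Quot.sound (show orbitRelOf τ x (τ x) from rfl)

lemma isOpenMap_involQuotMk (τ : X → X) (hτc : Continuous τ)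
    (hτinv : Function.Involutive τ) : IsOpenMap (involQuotMk τ) := by
  intro S hS
  have hpre : involQuotMk τ ⁻¹' (involQuotMk τ '' S) = S ∪ τ ⁻¹' S := by
    ext x
    simp only [mem_preimage, mem_image, mem_union]
    constructor
    · rintro ⟨s, hs, h⟩
      rcases (involQuotMk_eq_iff τ hτinv).mp h with h' | h'
      · exact Or.inl (h' ▸ hs)
      · right
        have : τ x = s := by rw [h', hτinv]
        show τ x ∈ S
        rw [this]; exact hs
    · rintro (hx | hx)
      · exact ⟨x, hx, rfl⟩
      · exact ⟨τ x, hx, ((involQuotMk_eq_iff τ hτinv).mpr (Or.inr (hτinv x).symm))⟩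
  rw [← isQuotientMap_quot_mk.isOpen_preimage]
  show IsOpen (involQuotMk τ ⁻¹' (involQuotMk τ '' S))
  rw [hpre]
  exact hS.union (hS.preimage hτc)

lemma secat_le_of_equivariant (τ : X → X) (hτc : Continuous τ)
    (hτinv : Function.Involutive τ) (m : ℕ) (g : X → Sph m) (hgc : Continuous g)
    (hgeq : ∀ x, g (τ x) = antipodal m (g x)) :
    secat (involQuotMk τ) ≤ ((m + 1 : ℕ) : ℕ∞) := by
  classical
  set q := involQuotMk τ with hq
  have hcoordneg : ∀ (x : X) (i : Fin (m + 1)),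
      (g (τ x) : EuclideanSpace ℝ (Fin (m + 1))) i = -((g x : EuclideanSpace ℝ (Fin (m + 1))) i) := by
    intro x i
    have : (g (τ x) : EuclideanSpace ℝ (Fin (m + 1))) = -(g x : EuclideanSpace ℝ (Fin (m + 1))) := by
      rw [hgeq x]; rfl
    simp [this]
  set A : Fin (m + 1) → Set X :=
    fun i => {x | 0 < (g x : EuclideanSpace ℝ (Fin (m + 1))) i} with hAdef
  have hAopen : ∀ i, IsOpen (A i) := by
    intro i
    exact isOpen_lt continuous_const
      ((EuclideanSpace.proj i).continuous.comp (continuous_subtype_val.comp hgc))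
  apply sInf_le
  refine ⟨m + 1, rfl, fun i => q '' A i, fun i => isOpenMap_involQuotMk τ hτc hτinv _ (hAopen i),
    ?_, ?_⟩
  · -- covering
    rw [eq_univ_iff_forall]
    intro u
    induction u using Quot.ind with
    | _ x =>
      have hgx : (g x : EuclideanSpace ℝ (Fin (m + 1))) ≠ 0 := by
        intro h0
        have hs := (g x).2
        rw [mem_sphere_zero_iff_norm] at hs
        rw [h0] at hs
        simp at hs
      obtain ⟨i, hi⟩ : ∃ i, (g x : EuclideanSpace ℝ (Fin (m + 1))) i ≠ 0 := by
        by_contra hc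
        push_neg at hc
        exact hgx (PiLp.ext hc)
      rw [mem_iUnion]
      rcases lt_or_gt_of_ne hi with hlt | hgt
      · refine ⟨i, τ x, ?_, ?_⟩
        · show 0 < (g (τ x) : EuclideanSpace ℝ (Fin (m + 1))) i
          rw [hcoordneg]; linarith
        · exact (involQuotMk_eq_iff τ hτinv).mpr (Or.inr (hτinv x).symm)
      · exact ⟨i, x, hgt, rfl⟩
  · -- local sections
    intro i
    have key : ∀ x y : X, x ∈ A i → y ∈ A i → q x = q y → x = y := by
      intro x y hx hy h
      rcases (involQuotMk_eq_iff τ hτinv).mp h with h' | h'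
      · exact h'.symm
      · exfalso
        have hxy : (g y : EuclideanSpace ℝ (Fin (m + 1))) i
            = -((g x : EuclideanSpace ℝ (Fin (m + 1))) i) := by
          rw [h', hcoordneg]
        have hx' : (0 : ℝ) < (g x : EuclideanSpace ℝ (Fin (m + 1))) i := hx
        have hy' : (0 : ℝ) < (g y : EuclideanSpace ℝ (Fin (m + 1))) i := hy
        rw [hxy] at hy'
        linarith
    set U : Set (InvolQuot τ) := q '' A i with hU
    set F : A i → U := fun a => ⟨q a, a, a.2, rfl⟩ with hF
    have hFc : Continuous F :=
      Continuous.subtype_mk (continuous_quot_mk.comp continuous_subtype_val) _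
    have hFbij : Function.Bijective F := by
      constructor
      · intro a b h
        exact Subtype.ext (key a b a.2 b.2 (congrArg Subtype.val h))
      · rintro ⟨u, x, hx, hqx⟩
        exact ⟨⟨x, hx⟩, Subtype.ext hqx⟩
    have hFopen : IsOpenMap F := by
      intro V hV
      have himg : F '' V = (Subtype.val : U → InvolQuot τ) ⁻¹' (q '' (Subtype.val '' V)) := by
        ext u
        constructor
        · rintro ⟨a, ha, rfl⟩
          exact ⟨a, ⟨a, ha, rfl⟩, rfl⟩
        · rintro ⟨x, ⟨a, ha, rfl⟩, h⟩
          exact ⟨a, ha, Subtype.ext h⟩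
      rw [himg]
      exact (isOpenMap_involQuotMk τ hτc hτinv _
        ((hAopen i).isOpenMap_subtype_val V hV)).preimage continuous_subtype_val
    set e := Equiv.toHomeomorphOfContinuousOpen (Equiv.ofBijective F hFbij) hFc hFopen with he
    refine ⟨fun u => (e.symm u : X), continuous_subtype_val.comp e.symm.continuous, ?_⟩
    intro u
    exact congrArg Subtype.val (e.apply_symm_apply u)

end AuxProof

/-- if `1 ≤ n ≤ secat q − 1` then `((X,τ);ℝⁿ)` satisfies the BUP; in
particular the `ℤ/2`-index of `(X,τ)` is at least `secat q − 1`. -/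
theorem stmt_16 {X : Type*} [TopologicalSpace X] [T2Space X]
    (τ : X → X) (hτc : Continuous τ) (hτinv : Function.Involutive τ)
    (hτfree : ∀ x, τ x ≠ x) :
    (∀ n : ℕ, 1 ≤ n → (n : ℕ∞) ≤ secat (involQuotMk τ) - 1 →
      BorsukUlamProperty X τ (EuclideanSpace ℝ (Fin n))) ∧
    secat (involQuotMk τ) - 1 ≤ z2Index τ := by
  constructor
  · intro n hn hle f hf
    by_contra hbu
    push_neg at hbu
    obtain ⟨m, rfl⟩ : ∃ m, n = m + 1 := ⟨n - 1, by omega⟩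
    have hne : ∀ x, f x - f (τ x) ≠ 0 := fun x => sub_ne_zero.mpr fun h => hbu x h.symm
    have hnorm : ∀ x, ‖f x - f (τ x)‖ ≠ 0 := fun x => norm_ne_zero_iff.mpr (hne x)
    set v : X → EuclideanSpace ℝ (Fin (m + 1)) := fun x => ‖f x - f (τ x)‖⁻¹ • (f x - f (τ x))
      with hv
    have hvmem : ∀ x, v x ∈ Metric.sphere (0 : EuclideanSpace ℝ (Fin (m + 1))) 1 := by
      intro x
      rw [mem_sphere_zero_iff_norm, hv]
      rw [norm_smul]
      simp [norm_inv, inv_mul_cancel₀ (hnorm x)]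
    set g : X → Sph m := fun x => ⟨v x, hvmem x⟩ with hg
    have hgc : Continuous g := by
      apply Continuous.subtype_mk
      exact ((hf.sub (hf.comp hτc)).norm.inv₀ hnorm).smul (hf.sub (hf.comp hτc))
    have hgeq : ∀ x, g (τ x) = antipodal m (g x) := by
      intro x
      apply Subtype.ext
      show v (τ x) = -(v x)
      rw [hv]
      simp only [hτinv x]
      rw [show f (τ x) - f x = -(f x - f (τ x)) by abel]
      rw [norm_neg, smul_neg]
    have h2 : secat (involQuotMk τ) ≤ ((m + 1 : ℕ) : ℕ∞) :=
      secat_le_of_equivariant τ hτc hτinv m g hgc hgeq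
    have h3 : secat (involQuotMk τ) - 1 ≤ (m : ℕ∞) := by
      rw [tsub_le_iff_right]
      exact h2.trans_eq (by push_cast; ring)
    have h4 : ((m + 1 : ℕ) : ℕ∞) ≤ (m : ℕ∞) := hle.trans h3
    rw [Nat.cast_le] at h4
    omega
  · apply le_sInf
    rintro b ⟨k, rfl, g, hgc, hgeq⟩
    rw [tsub_le_iff_right]
    have := secat_le_of_equivariant τ hτc hτinv k g hgc hgeq
    exact this.trans_eq (by push_cast; ring)
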